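/- Let m ≥ 3. Let u ∈ ℂ^m be such that v = Re(u) and w = Im(u) are linearly independent over ℝ, and let H ⊆ ℂ^m be a complex linear subspace of complex dimension m − 1 such that u ∈ H but the complex span of {v, w} is not contained in H. Then there exist vectors e₀, e₁, …, e_{m−1} forming a basis of ℝ^m whose determinant (with respect to the standard basis) equals 1, and a nonzero complex number λ, such that u = λ·(e₀ + i·e_{m−1}) and H is the complex span of {e₀ + i·e_{m−1}, e₁, …, e_{m−2}}. (This realizes every incident pair of a point of ℂℙ^{m−1} ∖ ℝℙ^{m−1} and a hyperplane through it transverse to the fiber of λ as the image of an element of SL(m,ℝ) under the framed incidence map.) -/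

import Mathlib

open Module


lemma linearIndependent_complexify {ι : Type*} [Fintype ι] {m : ℕ}
    {f : ι → Fin m → ℝ} (hf : LinearIndependent ℝ f) :
    LinearIndependent ℂ (fun i => (fun j => (f i j : ℂ))) := by
  rw [Fintype.linearIndependent_iff] at hf ⊢
  intro c hc i
  have h1 : ∀ j, ∑ k, c k * (f k j : ℂ) = 0 := by
    intro j
    simpa [Finset.sum_apply, Pi.smul_apply, smul_eq_mul] using congrFun hc j
  have hre : ∀ k, (c k).re = 0 := by
    apply hf
    funext j
    have := congrArg Complex.re (h1 j)
    simpa [Complex.re_sum, Complex.mul_re, Finset.sum_apply] using this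
  have him : ∀ k, (c k).im = 0 := by
    apply hf
    funext j
    have := congrArg Complex.im (h1 j)
    simpa [Complex.im_sum, Complex.mul_im, Finset.sum_apply] using this
  exact Complex.ext (hre i) (him i)

noncomputable def realifyₗ (m : ℕ) : (Fin m → ℝ) →ₗ[ℝ] (Fin m → ℂ) where
  toFun x := fun j => (x j : ℂ)
  map_add' x y := by funext j; simp
  map_smul' a x := by funext j; push_cast; simp

@[simp] lemma realifyₗ_apply (m : ℕ) (x : Fin m → ℝ) (j : Fin m) :
    realifyₗ m x j = (x j : ℂ) := rfl

set_option maxHeartbeats 1000000 in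
lemma span_eq_of_frame (n : ℕ) (H : Submodule ℂ (Fin (n+3) → ℂ))
    (hdim : Module.finrank ℂ H = n + 2)
    (e : Fin (n+3) → Fin (n+3) → ℝ) (heindep : LinearIndependent ℝ e)
    (hmidH : ∀ i : Fin (n+3), 1 ≤ (i:ℕ) → (i:ℕ) ≤ n+1 → (fun j => ((e i j : ℝ) : ℂ)) ∈ H)
    (hu'H : (fun j => ((e ⟨0, by omega⟩ j : ℝ) : ℂ)
        + Complex.I * ((e ⟨n+2, by omega⟩ j : ℝ) : ℂ)) ∈ H) :
    H = Submodule.span ℂ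
      (insert (fun j => ((e ⟨0, by omega⟩ j : ℝ) : ℂ)
          + Complex.I * ((e ⟨n+2, by omega⟩ j : ℝ) : ℂ))
        ((fun i => fun j => ((e i j : ℝ) : ℂ)) ''
          {i : Fin (n+3) | 1 ≤ (i : ℕ) ∧ (i : ℕ) ≤ n+1})) := by
  set E : Fin (n+3) → Fin (n+3) → ℂ := fun i => fun j => ((e i j : ℝ) : ℂ) with hE
  have hEindep : LinearIndependent ℂ E := linearIndependent_complexify heindep
  set u' : Fin (n+3) → ℂ :=
    fun j => ((e ⟨0, by omega⟩ j : ℝ) : ℂ) + Complex.I * ((e ⟨n+2, by omega⟩ j : ℝ) : ℂ) with hu'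
  have hu'E : u' = E ⟨0, by omega⟩ + Complex.I • E (Fin.last (n+2)) := by
    funext j
    simp only [hu', hE, Pi.add_apply, Pi.smul_apply, smul_eq_mul]
    rfl
  set g : Fin (n+2) → Fin (n+3) → ℂ :=
    fun i => if (i:ℕ) = 0 then u' else E (Fin.castSucc i) with hg
  have hg0 : g 0 = u' := by simp [hg]
  have hgs : ∀ i : Fin (n+2), (i:ℕ) ≠ 0 → g i = E (Fin.castSucc i) := by
    intro i h
    rw [hg]
    simp only [if_neg h]
  have hgindep : LinearIndependent ℂ g := by
    rw [Fintype.linearIndependent_iff]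
    intro c hc
    set d : Fin (n+3) → ℂ := Fin.snoc c (Complex.I * c 0) with hd
    have hsum : ∑ j : Fin (n+3), d j • E j = 0 := by
      have hsplit : ∑ j : Fin (n+3), d j • E j
          = (∑ i : Fin (n+2), c i • E (Fin.castSucc i))
            + (Complex.I * c 0) • E (Fin.last (n+2)) := by
        rw [Fin.sum_univ_castSucc]
        simp only [hd, Fin.snoc_castSucc, Fin.snoc_last]
      have hdiff : ∑ i : Fin (n+2), (c i • g i - c i • E (Fin.castSucc i))
          = c 0 • (Complex.I • E (Fin.last (n+2))) := by
        rw [Finset.sum_eq_single (0 : Fin (n+2))]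
        · rw [← smul_sub, hg0, hu'E]
          have hcs0 : Fin.castSucc (0 : Fin (n+2)) = (⟨0, by omega⟩ : Fin (n+3)) := rfl
          rw [hcs0, add_sub_cancel_left]
        · intro i _ hi
          rw [hgs i (by intro h; apply hi; ext; rw [Fin.val_zero]; exact h), sub_self]
        · intro hmem
          exact absurd (Finset.mem_univ _) hmem
      rw [Finset.sum_sub_distrib, hc, zero_sub] at hdiff
      have h2 : ∑ i : Fin (n+2), c i • E (Fin.castSucc i)
          = -(c 0 • (Complex.I • E (Fin.last (n+2)))) := by
        rw [← hdiff, neg_neg]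
      rw [hsplit, h2, smul_smul, mul_comm]
      exact neg_add_cancel _
    have hd0 := Fintype.linearIndependent_iff.mp hEindep d hsum
    intro i
    have := hd0 (Fin.castSucc i)
    rwa [hd, Fin.snoc_castSucc] at this
  have hcard : finrank ℂ ↥(Submodule.span ℂ (Set.range g)) = n+2 := by
    rw [finrank_span_eq_card hgindep, Fintype.card_fin]
  have hgH : ∀ i, g i ∈ H := by
    intro i
    by_cases h : (i:ℕ) = 0
    · have h0 : i = 0 := by ext; simpa using h
      rw [h0, hg0]; exact hu'H
    · rw [hgs i h]
      refine hmidH i.castSucc ?_ ?_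
      · rw [Fin.coe_castSucc]; omega
      · rw [Fin.coe_castSucc]; have := i.isLt; omega
  have hspanle : Submodule.span ℂ (Set.range g) ≤ H := by
    rw [Submodule.span_le]
    rintro x ⟨i, rfl⟩
    exact hgH i
  have hHeq : Submodule.span ℂ (Set.range g) = H :=
    Submodule.eq_of_le_of_finrank_le hspanle (by rw [hcard, hdim])
  have hset : insert u'
      ((fun i => fun j => ((e i j : ℝ) : ℂ)) '' {i : Fin (n+3) | 1 ≤ (i:ℕ) ∧ (i:ℕ) ≤ n+1})
      = Set.range g := by
    ext x
    rw [Set.mem_insert_iff]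
    constructor
    · rintro (rfl | ⟨i, ⟨h1, h2⟩, rfl⟩)
      · exact ⟨0, hg0⟩
      · refine ⟨⟨(i:ℕ), by have := i.isLt; omega⟩, ?_⟩
        rw [hgs _ (by show (i:ℕ) ≠ 0; omega)]
        have hcsi : Fin.castSucc (⟨(i:ℕ), by have := i.isLt; omega⟩ : Fin (n+2)) = i := by
          ext; simp
        rw [hcsi]
    · rintro ⟨i, rfl⟩
      by_cases h : (i:ℕ) = 0
      · have h0 : i = 0 := by ext; simpa using h
        rw [h0, hg0]
        exact Or.inl rfl
      · rw [hgs i h]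
        refine Or.inr ⟨Fin.castSucc i, ⟨?_, ?_⟩, rfl⟩
        · rw [Fin.coe_castSucc]; omega
        · rw [Fin.coe_castSucc]; have := i.isLt; omega
  exact hHeq.symm.trans (congrArg (Submodule.span ℂ) hset.symm)

set_option maxHeartbeats 4000000 in
lemma exists_good_basis (n : ℕ) (u : Fin (n+3) → ℂ)
    (hind : LinearIndependent ℝ ![fun j => (u j).re, fun j => (u j).im])
    (H : Submodule ℂ (Fin (n+3) → ℂ)) (hdim : Module.finrank ℂ H = n + 2)
    (huH : u ∈ H)
    (htrans : ¬ (Submodule.span ℂ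
        ({fun j => ((u j).re : ℂ), fun j => ((u j).im : ℂ)} : Set (Fin (n+3) → ℂ)) ≤ H)) :
    ∃ e : Fin (n+3) → Fin (n+3) → ℝ,
      LinearIndependent ℝ e ∧
      (Matrix.of e).det = 1 ∧
      (e ⟨0, by omega⟩ = fun j => (u j).re) ∧
      (e ⟨n+2, by omega⟩ = fun j => (u j).im) ∧
      ∀ i : Fin (n+3), 1 ≤ (i:ℕ) → (i:ℕ) ≤ n+1 → (fun j => ((e i j : ℝ) : ℂ)) ∈ H := by
  set v : Fin (n+3) → ℝ := fun j => (u j).re with hv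
  set w : Fin (n+3) → ℝ := fun j => (u j).im with hw
  set rv : Fin (n+3) → ℂ := fun j => (v j : ℂ) with hrv
  set rw' : Fin (n+3) → ℂ := fun j => (w j : ℂ) with hrw
  have hu : u = rv + Complex.I • rw' := by
    funext j
    apply Complex.ext <;> simp [hrv, hrw, hv, hw]
  -- key step
  have key : ∀ a b : ℝ, (a:ℂ) • rv + (b:ℂ) • rw' ∈ H → a = 0 ∧ b = 0 := by
    intro a b hz
    by_contra hab
    have hab' : (b : ℂ) - a * Complex.I ≠ 0 := by
      intro h
      apply hab
      have hre := congrArg Complex.re h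
      have him := congrArg Complex.im h
      simp at hre him
      exact ⟨him, hre⟩
    have hw'H : rw' ∈ H := by
      have h2 : ((a:ℂ) • rv + (b:ℂ) • rw') - (a:ℂ) • u = ((b:ℂ) - a * Complex.I) • rw' := by
        rw [hu]; funext j
        simp [smul_smul]
        ring
      have h3 : ((b:ℂ) - a * Complex.I) • rw' ∈ H := by
        rw [← h2]; exact H.sub_mem hz (H.smul_mem _ huH)
      have := H.smul_mem ((b:ℂ) - a * Complex.I)⁻¹ h3
      rwa [smul_smul, inv_mul_cancel₀ hab', one_smul] at this
    have hvH : rv ∈ H := by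
      have : u - Complex.I • rw' ∈ H := H.sub_mem huH (H.smul_mem _ hw'H)
      rwa [hu, add_sub_cancel_right] at this
    apply htrans
    rw [Submodule.span_le]
    rintro x hx
    rcases hx with h | h
    · subst h; exact hvH
    · simp only [Set.mem_singleton_iff] at h; subst h; exact hw'H
  -- submodules
  set V : Submodule ℝ (Fin (n+3) → ℝ) := Submodule.span ℝ (Set.range ![v, w]) with hV
  set W : Submodule ℝ (Fin (n+3) → ℝ) := (H.restrictScalars ℝ).comap (realifyₗ (n+3)) with hW
  have hVrank : finrank ℝ V = 2 := by
    rw [hV, finrank_span_eq_card hind, Fintype.card_fin]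
  have hWV : W ⊓ V = ⊥ := by
    rw [Submodule.eq_bot_iff]
    intro x hx
    rw [Submodule.mem_inf] at hx
    obtain ⟨hxW, hxV⟩ := hx
    rw [hV] at hxV
    rw [Submodule.mem_span_range_iff_exists_fun] at hxV
    obtain ⟨c, hc⟩ := hxV
    rw [Fin.sum_univ_two] at hc
    simp only [Matrix.cons_val_zero, Matrix.cons_val_one, Matrix.head_cons] at hc
    have hmem : (c 0 : ℂ) • rv + (c 1 : ℂ) • rw' ∈ H := by
      have : realifyₗ (n+3) x ∈ H := hxW
      convert this using 1
      funext j
      rw [← hc]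
      simp [hrv, hrw]
    obtain ⟨h0, h1⟩ := key _ _ hmem
    rw [← hc, h0, h1]
    simp
  have hQ : finrank ℂ ((Fin (n+3) → ℂ) ⧸ H) = 1 := by
    have := H.finrank_quotient_add_finrank
    rw [hdim, Module.finrank_fin_fun] at this
    omega
  have hQR : finrank ℝ ((Fin (n+3) → ℂ) ⧸ H) = 2 := by
    have := Module.finrank_mul_finrank ℝ ℂ ((Fin (n+3) → ℂ) ⧸ H)
    rw [hQ, Complex.finrank_real_complex] at this
    omega
  have hWrank : n + 1 ≤ finrank ℝ W := by
    set f : (Fin (n+3) → ℝ) →ₗ[ℝ] ((Fin (n+3) → ℂ) ⧸ H) :=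
      (H.mkQ.restrictScalars ℝ).comp (realifyₗ (n+3)) with hf
    have hker : LinearMap.ker f = W := by
      ext x
      simp [hf, hW, Submodule.Quotient.mk_eq_zero]
    have h1 := LinearMap.finrank_range_add_finrank_ker f
    rw [hker, Module.finrank_fin_fun] at h1
    have h2 : finrank ℝ (LinearMap.range f) ≤ 2 := hQR ▸ (LinearMap.range f).finrank_le
    omega
  have hsum := Submodule.finrank_sup_add_finrank_inf_eq W V
  rw [hWV, hVrank, finrank_bot] at hsum
  have hle : finrank ℝ ↥(W ⊔ V) ≤ n + 3 := by
    have := Submodule.finrank_le (W ⊔ V)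
    rwa [Module.finrank_fin_fun] at this
  have hWrank' : finrank ℝ W = n + 1 := by omega
  have hsup : W ⊔ V = ⊤ := by
    apply Submodule.eq_top_of_finrank_eq
    rw [Module.finrank_fin_fun]
    omega
  -- basis of W
  obtain ⟨q, hqW, hqind⟩ : ∃ q : Fin (n+1) → (Fin (n+3) → ℝ),
      (∀ k, q k ∈ W) ∧ LinearIndependent ℝ q := by
    let b : Basis (Fin (n+1)) ℝ W := Module.finBasisOfFinrankEq ℝ W hWrank'
    exact ⟨fun k => (b k : Fin (n+3) → ℝ), fun k => SetLike.coe_mem _,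
      b.linearIndependent.map' W.subtype W.ker_subtype⟩
  set e0 : Fin (n+3) → Fin (n+3) → ℝ := fun i =>
    if h0 : (i:ℕ) = 0 then v else if hl : (i:ℕ) = n+2 then w
    else q ⟨(i:ℕ)-1, by have := i.isLt; omega⟩ with he0def
  have he00 : e0 ⟨0, by omega⟩ = v := by simp [he0def]
  have he0last : e0 ⟨n+2, by omega⟩ = w := by
    simp [he0def]
  have he0mid : ∀ (i : Fin (n+3)) (h1 : 1 ≤ (i:ℕ)) (h2 : (i:ℕ) ≤ n+1),
      e0 i = q ⟨(i:ℕ)-1, by omega⟩ := by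
    intro i h1 h2
    simp only [he0def]
    rw [dif_neg (by omega), dif_neg (by omega)]
  have he0indep : LinearIndependent ℝ e0 := by
    rw [Fintype.linearIndependent_iff]
    intro c hc
    rw [Fin.sum_univ_succ, Fin.sum_univ_castSucc] at hc
    have hmid : ∀ k : Fin (n+1), e0 ((Fin.castSucc k).succ) = q k := by
      intro k
      rw [he0mid ((Fin.castSucc k).succ) (by simp)
        (by have := k.isLt; simp only [Fin.val_succ, Fin.coe_castSucc]; omega)]
      congr 1
    have hlast : e0 ((Fin.last (n+1)).succ) = w := by
      have : (Fin.last (n+1)).succ = (⟨n+2, by omega⟩ : Fin (n+3)) := by ext; simp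
      rw [this, he0last]
    have h00 : e0 (0 : Fin (n+3)) = v := he00
    rw [h00, hlast] at hc
    simp only [hmid] at hc
    -- hc : c 0 • v + (∑ k, c (castSucc k).succ • b k + c (last).succ • w) = 0
    set x : Fin (n+3) → ℝ := c 0 • v + c ((Fin.last (n+1)).succ) • w with hx
    set y : Fin (n+3) → ℝ := ∑ k : Fin (n+1), c ((Fin.castSucc k).succ) • q k with hy
    have hxy : x + y = 0 := by rw [← hc, hx, hy]; abel
    have hxV : x ∈ V := by
      rw [hV, Submodule.mem_span_range_iff_exists_fun]
      exact ⟨![c 0, c ((Fin.last (n+1)).succ)], by simp [Fin.sum_univ_two, hx]⟩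
    have hyW : y ∈ W := by
      rw [hy]
      exact Submodule.sum_mem _ (fun k _ => Submodule.smul_mem _ _ (hqW k))
    have hxW : x ∈ W := by
      have : x = -y := eq_neg_of_add_eq_zero_left hxy
      rw [this]; exact W.neg_mem hyW
    have hx0 : x = 0 := by
      have : x ∈ W ⊓ V := ⟨hxW, hxV⟩
      rwa [hWV, Submodule.mem_bot] at this
    have hy0 : y = 0 := by
      have : y = -x := eq_neg_of_add_eq_zero_right hxy
      rw [this, hx0, neg_zero]
    have hc0 : c 0 = 0 ∧ c ((Fin.last (n+1)).succ) = 0 := by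
      have := Fintype.linearIndependent_iff.mp hind ![c 0, c ((Fin.last (n+1)).succ)] (by
        rw [Fin.sum_univ_two]
        simpa [hx] using hx0)
      exact ⟨by simpa using this 0, by simpa using this 1⟩
    have hcmid : ∀ k : Fin (n+1), c ((Fin.castSucc k).succ) = 0 := by
      have := Fintype.linearIndependent_iff.mp hqind (fun k => c ((Fin.castSucc k).succ)) (by rw [← hy0, hy])
      exact this
    intro i
    rcases Nat.lt_trichotomy (i:ℕ) 1 with h | h | h
    · have : i = (0 : Fin (n+3)) := by ext; rw [Fin.val_zero]; omega
      rw [this]; exact hc0.1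
    · have : i = (Fin.castSucc (⟨0, by omega⟩ : Fin (n+1))).succ := by ext; simp; omega
      rw [this]; exact hcmid _
    · rcases Nat.lt_or_ge (i:ℕ) (n+2) with h2 | h2
      · have : i = (Fin.castSucc (⟨(i:ℕ)-1, by omega⟩ : Fin (n+1))).succ := by ext; simp; omega
        rw [this]; exact hcmid _
      · have : i = (Fin.last (n+1)).succ := by ext; simp; have := i.isLt; omega
        rw [this]; exact hc0.2
  -- determinant normalization
  have hδunit : IsUnit (Matrix.of e0) :=
    Matrix.linearIndependent_rows_iff_isUnit.mp (by exact he0indep)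
  have hδ0 : (Matrix.of e0).det ≠ 0 := ((Matrix.isUnit_iff_isUnit_det _).mp hδunit).ne_zero
  set δu : ℝˣ := Units.mk0 _ hδ0 with hδu
  set uu : Fin (n+3) → ℝˣ := fun i => if (i:ℕ) = 1 then δu⁻¹ else 1 with huu
  set e : Fin (n+3) → Fin (n+3) → ℝ := fun i => (uu i : ℝ) • e0 i with he
  have he_0 : e ⟨0, by omega⟩ = v := by
    rw [he]
    simp only [huu]
    rw [if_neg (by norm_num), Units.val_one, one_smul]
    exact he00
  have he_last : e ⟨n+2, by omega⟩ = w := by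
    rw [he]
    simp only [huu]
    rw [if_neg (by omega), Units.val_one, one_smul]
    exact he0last
  have he_W : ∀ (i : Fin (n+3)), 1 ≤ (i:ℕ) → (i:ℕ) ≤ n+1 → e i ∈ W := by
    intro i h1 h2
    rw [he]
    apply W.smul_mem
    rw [he0mid i h1 h2]
    exact hqW _
  have heindep : LinearIndependent ℝ e := he0indep.units_smul uu
  have hofe : Matrix.of e
      = (Matrix.of e0).updateRow ⟨1, by omega⟩ (((δu⁻¹ : ℝˣ) : ℝ) • e0 ⟨1, by omega⟩) := by
    ext i j
    rw [Matrix.updateRow_apply]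
    by_cases hi : i = ⟨1, by omega⟩
    · subst hi
      rw [if_pos rfl]
      simp [he, huu]
    · rw [if_neg hi]
      have hne : ¬ ((i:ℕ) = 1) := by
        intro hcon
        exact hi (by ext; simpa using hcon)
      simp only [he, huu, Matrix.of_apply]
      rw [if_neg hne]
      simp
  have hdet : (Matrix.of e).det = 1 := by
    rw [hofe]
    have h1 : ((δu⁻¹ : ℝˣ) : ℝ) • e0 ⟨1, by omega⟩
        = ((δu⁻¹ : ℝˣ) : ℝ) • (Matrix.of e0) ⟨1, by omega⟩ := rfl
    rw [h1, Matrix.det_updateRow_smul, Matrix.updateRow_eq_self]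
    simp [hδu]
    exact inv_mul_cancel₀ hδ0
  exact ⟨e, heindep, hdet, he_0, he_last, fun i h1 h2 => he_W i h1 h2⟩

/-- **Surjectivity of the framed incidence map.**
Let `m ≥ 3`, let `u ∈ ℂᵐ` have linearly independent real and imaginary parts, and let `H`
be a complex hyperplane (complex codimension one subspace) containing `u` but not containing
the complex span of `{Re u, Im u}`.  Then there is a real basis `e₀, …, e_{m-1}` of `ℝᵐ` of
determinant `1` and a nonzero `λ ∈ ℂ` with `u = λ (e₀ + i e_{m-1})` and
`H = spanℂ {e₀ + i e_{m-1}, e₁, …, e_{m-2}}`. -/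
theorem framed_incidence_surjective (m : ℕ) (hm : 3 ≤ m) (u : Fin m → ℂ)
    (hind : LinearIndependent ℝ ![fun j => (u j).re, fun j => (u j).im])
    (H : Submodule ℂ (Fin m → ℂ)) (hdim : Module.finrank ℂ H = m - 1)
    (huH : u ∈ H)
    (htrans : ¬ (Submodule.span ℂ
        ({fun j => ((u j).re : ℂ), fun j => ((u j).im : ℂ)} : Set (Fin m → ℂ)) ≤ H)) :
    ∃ (e : Fin m → Fin m → ℝ) (lam : ℂ), lam ≠ 0 ∧
      (Matrix.of e).det = 1 ∧
      u = lam • (fun j => (e ⟨0, by omega⟩ j : ℂ) + Complex.I * (e ⟨m - 1, by omega⟩ j : ℂ)) ∧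
      H = Submodule.span ℂ
        (insert (fun j => (e ⟨0, by omega⟩ j : ℂ) + Complex.I * (e ⟨m - 1, by omega⟩ j : ℂ))
          ((fun i => fun j => (e i j : ℂ)) '' {i : Fin m | 1 ≤ (i : ℕ) ∧ (i : ℕ) ≤ m - 2})) := by
  obtain ⟨n, rfl⟩ : ∃ n, m = n + 3 := ⟨m - 3, by omega⟩
  replace hdim : Module.finrank ℂ H = n + 2 := by omega
  obtain ⟨e, heindep, hdet, he0, helast, hmid⟩ :=
    exists_good_basis n u hind H hdim huH htrans
  have hu'u : (fun j => ((e ⟨0, by omega⟩ j : ℝ) : ℂ)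
      + Complex.I * ((e ⟨n+2, by omega⟩ j : ℝ) : ℂ)) = u := by
    funext j
    rw [he0, helast]
    apply Complex.ext <;> simp
  have huH' : (fun j => ((e ⟨0, by omega⟩ j : ℝ) : ℂ)
      + Complex.I * ((e ⟨n+2, by omega⟩ j : ℝ) : ℂ)) ∈ H := by
    rw [← hu'u] at huH
    exact huH
  have hspan := span_eq_of_frame n H hdim e heindep hmid huH'
  exact ⟨e, 1, one_ne_zero, hdet, by rw [one_smul]; exact hu'u.symm, hspan⟩
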